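/- The leximin extension of a linear order on candidates satisfies fixed-cardinality responsiveness: if X ⪰_lmin Y for k-element sets X, Y and Z is disjoint from X and Y, then X ∪ Z ⪰_lmin Y ∪ Z. -/

import Mathlib

/-- The increasing list of the elements of a finite set (worst element first). -/
def ascList {C : Type*} [LinearOrder C] (X : Finset C) : List C :=
  X.sort (· ≤ ·)

/-- Leximin comparison of committees: either the increasing (worst-first) lists
agree, or at the first index (starting from the worst element) where they
differ, the element of `X` is preferred. -/
def leximin {C : Type*} [LinearOrder C] (X Y : Finset C) : Prop :=
  ascList X = ascList Y ∨ List.Lex (· < ·) (ascList Y) (ascList X)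

lemma ascList_insert {C : Type*} [LinearOrder C] (z : C) (X : Finset C) (hz : z ∉ X) :
    ascList (insert z X) = List.orderedInsert (· ≤ ·) z (ascList X) := by
  have p1 : (ascList (insert z X)).Perm (z :: ascList X) := by
    rw [← Multiset.coe_eq_coe]
    simp only [ascList, Finset.sort]
    rw [Multiset.sort_eq, ← Multiset.cons_coe, Multiset.sort_eq,
      Finset.insert_val_of_notMem hz]
  have p2 : (ascList (insert z X)).Perm (List.orderedInsert (· ≤ ·) z (ascList X)) :=
    p1.trans (List.perm_orderedInsert _ z _).symm
  exact List.Perm.eq_of_pairwise' (Finset.pairwise_sort _ _)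
    ((Finset.pairwise_sort _ _).orderedInsert z _) p2

lemma lex_orderedInsert {C : Type*} [LinearOrder C] (z : C) :
    ∀ (a b : List C), a.length = b.length → List.Lex (· < ·) b a →
      List.Lex (· < ·) (List.orderedInsert (· ≤ ·) z b) (List.orderedInsert (· ≤ ·) z a)
  | a, b, hlen, hlex => by
    cases hlex with
    | nil => simp at hlen
    | @rel y b' x a' hyx =>
      simp only [List.orderedInsert]
      by_cases h1 : z ≤ y
      · have h2 : z ≤ x := h1.trans hyx.le
        simp [h1, h2]
        exact List.Lex.rel hyx
      · by_cases h2 : z ≤ x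
        · simp [h1, h2]
          exact List.Lex.rel (lt_of_not_ge h1)
        · simp [h1, h2]
          exact List.Lex.rel hyx
      | @cons c b' a' hlex' =>
        simp only [List.orderedInsert]
        by_cases h1 : z ≤ c
        · simp [h1]
          exact hlex'
        · simp [h1]
          exact lex_orderedInsert z a' b' (by simpa using hlen) hlex'

lemma leximin_insert {C : Type*} [LinearOrder C] (z : C) (A B : Finset C)
    (hcard : A.card = B.card) (hzA : z ∉ A) (hzB : z ∉ B) (h : leximin A B) :
    leximin (insert z A) (insert z B) := by
  cases h with
  | inl heq =>
    left
    rw [ascList_insert z A hzA, ascList_insert z B hzB, heq]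
  | inr hlex =>
    right
    rw [ascList_insert z A hzA, ascList_insert z B hzB]
    apply lex_orderedInsert
    · unfold ascList; rw [Finset.length_sort, Finset.length_sort, hcard]
    · exact hlex

/-- The leximin set extension satisfies fixed-cardinality responsiveness. -/
theorem stmt_3 {C : Type*} [LinearOrder C] (k : ℕ) (X Y Z : Finset C)
    (hX : X.card = k) (hY : Y.card = k)
    (hZX : Disjoint Z X) (hZY : Disjoint Z Y)
    (h : leximin X Y) :
    leximin (X ∪ Z) (Y ∪ Z) := by
  classical
  induction Z using Finset.induction_on with
  | empty => simpa using h
  | @insert z s hzs ih =>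
    have hzX : z ∉ X := fun hmem => (Finset.disjoint_left.mp hZX (Finset.mem_insert_self z s)) hmem
    have hzY : z ∉ Y := fun hmem => (Finset.disjoint_left.mp hZY (Finset.mem_insert_self z s)) hmem
    have hsX : Disjoint s X := hZX.mono_left (Finset.subset_insert z s)
    have hsY : Disjoint s Y := hZY.mono_left (Finset.subset_insert z s)
    have ih' := ih hsX hsY
    have hz1 : z ∉ X ∪ s := by simp [hzX, hzs]
    have hz2 : z ∉ Y ∪ s := by simp [hzY, hzs]
    have hcard : (X ∪ s).card = (Y ∪ s).card := by
      rw [Finset.card_union_of_disjoint hsX.symm, Finset.card_union_of_disjoint hsY.symm, hX, hY]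
    have : X ∪ insert z s = insert z (X ∪ s) := by
      ext a; simp [Finset.mem_insert, Finset.mem_union]
    rw [this]
    have : Y ∪ insert z s = insert z (Y ∪ s) := by
      ext a; simp [Finset.mem_insert, Finset.mem_union]
    rw [this]
    exact leximin_insert z _ _ hcard hz1 hz2 ih'
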